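/- For every integer m ≥ 1, every real x > 0 and every real t > 0, Σ_{n=0}^∞ (−1)^n t^n L_n(x)/(n + m)! = (exp(−t)/t^m) · Σ_{n=m}^∞ ((n−1)!/((m−1)!(n−m)!)) · (t/x)^{n/2} · I_n(2√(xt)), where both series converge. -/

import Mathlib

open MeasureTheory Real

open Finset in
lemma aux_finId (s : ℕ) : ∀ (N k : ℕ),
    ∑ j ∈ range (N+1), (-1:ℝ)^j * (N.choose j) * (Nat.factorial (k+j)) / (Nat.factorial (k+j+s+1))
      = ((Nat.factorial (N+s)) * (Nat.factorial k)) / ((Nat.factorial s) * (Nat.factorial (N+s+1+k))) := by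
  intro N
  induction N with
  | zero =>
    intro k
    have h1 : k + 0 + s + 1 = 0 + s + 1 + k := by omega
    have h2 : (0:ℕ) + s = s := by omega
    rw [Finset.sum_range_one]
    rw [h1, h2]
    have hs : (Nat.factorial s : ℝ) ≠ 0 := Nat.cast_ne_zero.2 (Nat.factorial_ne_zero _)
    field_simp
    simp
  | succ N ih =>
    intro k
    rw [Finset.sum_range_succ' (fun j => (-1:ℝ)^j * ((N+1).choose j) * (Nat.factorial (k+j)) / (Nat.factorial (k+j+s+1)))]
    have split : ∀ j ∈ Finset.range (N+1),
        (-1:ℝ)^(j+1) * ((N+1).choose (j+1)) * (Nat.factorial (k+(j+1))) / (Nat.factorial (k+(j+1)+s+1))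
        = (-1:ℝ)^(j+1) * (N.choose (j+1)) * (Nat.factorial (k+(j+1))) / (Nat.factorial (k+(j+1)+s+1))
          - (-1:ℝ)^j * (N.choose j) * (Nat.factorial ((k+1)+j)) / (Nat.factorial ((k+1)+j+s+1)) := by
      intro j _
      have hc : (((N+1).choose (j+1) : ℝ)) = N.choose j + N.choose (j+1) := by
        exact_mod_cast Nat.choose_succ_succ' N j
      rw [hc, show (k+1)+j = k+(j+1) by ring]
      ring
    rw [Finset.sum_congr rfl split, Finset.sum_sub_distrib]
    have recomb : (∑ j ∈ Finset.range (N+1),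
          (-1:ℝ)^(j+1) * (N.choose (j+1)) * (Nat.factorial (k+(j+1))) / (Nat.factorial (k+(j+1)+s+1)))
        + (-1:ℝ)^0 * (((N+1):ℕ).choose 0) * (Nat.factorial (k+0)) / (Nat.factorial (k+0+s+1))
        = ∑ j ∈ Finset.range (N+1), (-1:ℝ)^j * (N.choose j) * (Nat.factorial (k+j)) / (Nat.factorial (k+j+s+1)) := by
      have h0 : ((((N+1):ℕ).choose 0 : ℝ)) = ((N.choose 0 : ℕ) : ℝ) := by simp
      rw [h0]
      rw [← Finset.sum_range_succ' (fun j => (-1:ℝ)^j * (N.choose j) * (Nat.factorial (k+j)) / (Nat.factorial (k+j+s+1))) (N+1)]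
      rw [Finset.sum_range_succ]
      simp [Nat.choose_succ_self]
    have e1 := ih k
    have e2 := ih (k+1)
    have final : ((Nat.factorial (N+s):ℝ) * (Nat.factorial k)) / ((Nat.factorial s) * (Nat.factorial (N+s+1+k)))
        - ((Nat.factorial (N+s):ℝ) * (Nat.factorial (k+1))) / ((Nat.factorial s) * (Nat.factorial (N+s+1+(k+1))))
        = ((Nat.factorial ((N+1)+s)) * (Nat.factorial k)) / ((Nat.factorial s) * (Nat.factorial ((N+1)+s+1+k))) := by
      have f1 : Nat.factorial ((N+1)+s) = (N+s+1) * Nat.factorial (N+s) := by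
        rw [show (N+1)+s = (N+s)+1 by ring, Nat.factorial_succ]
      have f2 : Nat.factorial (N+s+1+(k+1)) = (N+s+1+k+1) * Nat.factorial (N+s+1+k) := by
        rw [show N+s+1+(k+1) = (N+s+1+k)+1 by ring, Nat.factorial_succ]
      have f3 : Nat.factorial ((N+1)+s+1+k) = (N+s+1+k+1) * Nat.factorial (N+s+1+k) := by
        rw [show (N+1)+s+1+k = (N+s+1+k)+1 by ring, Nat.factorial_succ]
      have f4 : Nat.factorial (k+1) = (k+1) * Nat.factorial k := Nat.factorial_succ k
      rw [f1, f2, f3, f4]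
      push_cast
      have hs : (Nat.factorial s : ℝ) ≠ 0 := Nat.cast_ne_zero.2 (Nat.factorial_ne_zero _)
      have hk : (Nat.factorial k : ℝ) ≠ 0 := Nat.cast_ne_zero.2 (Nat.factorial_ne_zero _)
      have hn : (Nat.factorial (N+s+1+k) : ℝ) ≠ 0 := Nat.cast_ne_zero.2 (Nat.factorial_ne_zero _)
      have hc1 : ((N:ℝ)+s+1+k+1) ≠ 0 := by positivity
      field_simp
      ring
    calc (∑ j ∈ Finset.range (N+1), (-1:ℝ)^(j+1) * (N.choose (j+1)) * (Nat.factorial (k+(j+1))) / (Nat.factorial (k+(j+1)+s+1)))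
          - (∑ j ∈ Finset.range (N+1), (-1:ℝ)^j * (N.choose j) * (Nat.factorial ((k+1)+j)) / (Nat.factorial ((k+1)+j+s+1)))
          + (-1:ℝ)^0 * (((N+1):ℕ).choose 0) * (Nat.factorial (k+0)) / (Nat.factorial (k+0+s+1))
        = ((∑ j ∈ Finset.range (N+1), (-1:ℝ)^(j+1) * (N.choose (j+1)) * (Nat.factorial (k+(j+1))) / (Nat.factorial (k+(j+1)+s+1)))
            + (-1:ℝ)^0 * (((N+1):ℕ).choose 0) * (Nat.factorial (k+0)) / (Nat.factorial (k+0+s+1)))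
          - (∑ j ∈ Finset.range (N+1), (-1:ℝ)^j * (N.choose j) * (Nat.factorial ((k+1)+j)) / (Nat.factorial ((k+1)+j+s+1))) := by ring
      _ = ((Nat.factorial (N+s):ℝ) * (Nat.factorial k)) / ((Nat.factorial s) * (Nat.factorial (N+s+1+k)))
          - ((Nat.factorial (N+s):ℝ) * (Nat.factorial (k+1))) / ((Nat.factorial s) * (Nat.factorial (N+s+1+(k+1)))) := by
            rw [recomb, e1, e2]
      _ = _ := final

lemma aux_row (s k : ℕ) (t : ℝ) (ht : 0 < t) :
    (∑' j : ℕ, (-1:ℝ)^j * (Nat.factorial (k+j)) / (Nat.factorial j * Nat.factorial (k+j+s+1)) * t^j)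
    = Real.exp (-t) * ∑' N : ℕ,
        ((Nat.factorial (N+s) : ℝ) * Nat.factorial k) / (Nat.factorial s * Nat.factorial N * Nat.factorial (N+s+1+k)) * t^N := by
  set a : ℕ → ℝ := fun j => (-1:ℝ)^j * (Nat.factorial (k+j)) / (Nat.factorial j * Nat.factorial (k+j+s+1)) * t^j with ha
  set e : ℕ → ℝ := fun i => t^i / Nat.factorial i with he
  have hexp : Real.exp t = ∑' i : ℕ, e i := by
    rw [Real.exp_eq_exp_ℝ, NormedSpace.exp_eq_tsum_div]
  have hae : ∀ j, ‖a j‖ ≤ t^j / Nat.factorial j := by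
    intro j
    have h1 : ‖a j‖ = (Nat.factorial (k+j) : ℝ) / (Nat.factorial j * Nat.factorial (k+j+s+1)) * t^j := by
      simp [ha, Real.norm_eq_abs, abs_mul, abs_div, abs_pow, abs_of_pos ht, Nat.abs_cast]
    rw [h1]
    have hle : (Nat.factorial (k+j) : ℝ) ≤ Nat.factorial (k+j+s+1) :=
      Nat.cast_le.2 (Nat.factorial_le (by omega))
    calc (Nat.factorial (k+j) : ℝ) / (Nat.factorial j * Nat.factorial (k+j+s+1)) * t^j
        ≤ (Nat.factorial (k+j+s+1) : ℝ) / (Nat.factorial j * Nat.factorial (k+j+s+1)) * t^j := by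
          gcongr
      _ = t^j / Nat.factorial j := by
          rw [div_mul_eq_div_div_swap, div_self (by positivity : (Nat.factorial (k+j+s+1):ℝ) ≠ 0)]
          ring
  have hsum_pow : Summable (fun j : ℕ => t^j / (Nat.factorial j : ℝ)) :=
    Real.summable_pow_div_factorial t
  have hna : Summable (fun j => ‖a j‖) :=
    Summable.of_nonneg_of_le (fun j => norm_nonneg _) hae hsum_pow
  have hne : Summable (fun i => ‖e i‖) := by
    have : ∀ i, ‖e i‖ = t^i / Nat.factorial i := by
      intro i; simp [he, Real.norm_eq_abs, abs_div, abs_pow, abs_of_pos ht, Nat.abs_cast]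
    exact (funext this : (fun i => ‖e i‖) = _) ▸ hsum_pow
  have cauchy := tsum_mul_tsum_eq_tsum_sum_antidiagonal_of_summable_norm hne hna
  have diag : ∀ N : ℕ, (∑ kl ∈ Finset.HasAntidiagonal.antidiagonal N, e kl.1 * a kl.2)
      = ((Nat.factorial (N+s) : ℝ) * Nat.factorial k) / (Nat.factorial s * Nat.factorial N * Nat.factorial (N+s+1+k)) * t^N := by
    intro N
    rw [Finset.Nat.sum_antidiagonal_eq_sum_range_succ_mk]
    have refl1 : ∑ i ∈ Finset.range (N+1), e i * a (N - i)
        = ∑ j ∈ Finset.range (N+1), e (N - j) * a j := by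
      rw [← Finset.sum_range_reflect (fun j => e (N - j) * a j) (N+1)]
      apply Finset.sum_congr rfl
      intro i hi
      have hiN : i ≤ N := by simpa [Nat.lt_succ_iff] using hi
      congr 2 <;> omega
    rw [refl1]
    have term : ∀ j ∈ Finset.range (N+1),
        e (N - j) * a j = (t^N / Nat.factorial N) *
          ((-1:ℝ)^j * (N.choose j) * (Nat.factorial (k+j)) / (Nat.factorial (k+j+s+1))) := by
      intro j hj
      have hjN : j ≤ N := by simpa [Nat.lt_succ_iff] using hj
      have hpow : t^(N-j) * t^j = t^N := by
        rw [← pow_add]; congr 1; omega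
      have hch : (N.choose j : ℝ) = (Nat.factorial N) / (Nat.factorial j * Nat.factorial (N-j)) :=
        Nat.cast_choose ℝ hjN
      simp only [he, ha]
      rw [hch]
      have hNj : (Nat.factorial (N-j) : ℝ) ≠ 0 := by positivity
      have hj' : (Nat.factorial j : ℝ) ≠ 0 := by positivity
      have hN : (Nat.factorial N : ℝ) ≠ 0 := by positivity
      have hK : (Nat.factorial (k+j+s+1) : ℝ) ≠ 0 := by positivity
      field_simp
      rw [← hpow]
    rw [Finset.sum_congr rfl term, ← Finset.mul_sum, aux_finId s N k]
    have hs : (Nat.factorial s : ℝ) ≠ 0 := by positivity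
    have hN : (Nat.factorial N : ℝ) ≠ 0 := by positivity
    have hK : (Nat.factorial (N+s+1+k) : ℝ) ≠ 0 := by positivity
    field_simp
  have cauchy2 : Real.exp t * (∑' j, a j)
      = ∑' N : ℕ, ((Nat.factorial (N+s) : ℝ) * Nat.factorial k) / (Nat.factorial s * Nat.factorial N * Nat.factorial (N+s+1+k)) * t^N := by
    rw [hexp, cauchy]
    exact tsum_congr diag
  have hexp_ne : Real.exp t ≠ 0 := Real.exp_ne_zero t
  rw [← cauchy2, Real.exp_neg]
  field_simp


/-- Modified Bessel function of the first kind of integer order `n`. -/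
noncomputable def besselI (n : ℕ) (x : ℝ) : ℝ :=
  ∑' k : ℕ, (x / 2) ^ (n + 2 * k) / (Nat.factorial k * Nat.factorial (n + k))

/-- Laguerre polynomial of degree `n`. -/
noncomputable def laguerre (n : ℕ) (x : ℝ) : ℝ :=
  ∑ k ∈ Finset.range (n + 1),
    (-1 : ℝ) ^ k * Nat.factorial n * x ^ k /
      ((Nat.factorial k) ^ 2 * Nat.factorial (n - k))

set_option maxHeartbeats 2000000 in
/-- For `m ≥ 1`, `x > 0`, `t > 0`:
`Σ_{n≥0} (−1)ⁿ tⁿ Lₙ(x)/(n+m)!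
  = (e^(−t)/tᵐ) Σ_{n≥m} ((n−1)!/((m−1)!(n−m)!)) (t/x)^(n/2) Iₙ(2√(xt))`,
both series converging (the right-hand sum over `n ≥ m` is reindexed by `n = j + m`). -/
theorem laguerre_series_eq_besselI_series (m : ℕ) (x t : ℝ)
    (hm : 1 ≤ m) (hx : 0 < x) (ht : 0 < t) :
    Summable (fun n : ℕ => (-1 : ℝ) ^ n * t ^ n * laguerre n x / Nat.factorial (n + m)) ∧
    Summable (fun j : ℕ =>
      ((Nat.factorial (j + m - 1) : ℝ) / (Nat.factorial (m - 1) * Nat.factorial j)) *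
        (t / x) ^ (((j : ℝ) + m) / 2) * besselI (j + m) (2 * Real.sqrt (x * t))) ∧
    (∑' n : ℕ, (-1 : ℝ) ^ n * t ^ n * laguerre n x / Nat.factorial (n + m)) =
      (Real.exp (-t) / t ^ m) *
        ∑' j : ℕ,
          ((Nat.factorial (j + m - 1) : ℝ) / (Nat.factorial (m - 1) * Nat.factorial j)) *
            (t / x) ^ (((j : ℝ) + m) / 2) * besselI (j + m) (2 * Real.sqrt (x * t)) := by
  obtain ⟨s, rfl⟩ : ∃ s, m = s + 1 := ⟨m - 1, by omega⟩
  clear hm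
  -- the double-sum kernels
  set g : ℕ × ℕ → ℝ := fun p =>
    (-1:ℝ)^p.2 * t^(p.1+p.2) * (Nat.factorial (p.1+p.2)) * x^p.1 /
      ((Nat.factorial p.1)^2 * Nat.factorial p.2 * Nat.factorial (p.1+p.2+s+1)) with hgdef
  set h : ℕ × ℕ → ℝ := fun p =>
    ((Nat.factorial (p.2+s) : ℝ)) * t^(p.2+p.1) * x^p.1 /
      (Nat.factorial s * Nat.factorial p.2 * Nat.factorial p.1 * Nat.factorial (p.2+s+1+p.1)) with hhdef
  have hfac_pos : ∀ n : ℕ, (0:ℝ) < Nat.factorial n := fun n =>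
    Nat.cast_pos.2 (Nat.factorial_pos n)
  -- summable dominating product
  have hu : Summable (fun k : ℕ => (x*t)^k / (Nat.factorial k : ℝ)) :=
    Real.summable_pow_div_factorial (x*t)
  have hv : Summable (fun j : ℕ => t^j / (Nat.factorial j : ℝ)) :=
    Real.summable_pow_div_factorial t
  have huv : Summable (fun p : ℕ × ℕ => ((x*t)^p.1 / (Nat.factorial p.1 : ℝ)) * (t^p.2 / (Nat.factorial p.2 : ℝ))) :=
    Summable.mul_of_nonneg hu hv (fun k => by positivity) (fun j => by positivity)
  -- summability of g
  have Sg : Summable g := by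
    apply Summable.of_norm_bounded huv
    rintro ⟨k, j⟩
    have h1 : ‖g (k, j)‖ = t^(k+j) * (Nat.factorial (k+j)) * x^k /
        ((Nat.factorial k : ℝ)^2 * Nat.factorial j * Nat.factorial (k+j+s+1)) := by
      simp [hgdef, abs_mul, abs_div, abs_pow, abs_of_pos ht, abs_of_pos hx, Nat.abs_cast,
        Real.norm_eq_abs]
    rw [h1]
    have e1 : t^(k+j) * ((Nat.factorial (k+j)):ℝ) * x^k /
        ((Nat.factorial k : ℝ)^2 * Nat.factorial j * Nat.factorial (k+j+s+1))
        = ((x*t)^k / ((Nat.factorial k:ℝ)^2)) * (t^j / (Nat.factorial j)) *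
          ((Nat.factorial (k+j) : ℝ) / (Nat.factorial (k+j+s+1))) := by
      rw [pow_add, mul_pow]; ring
    rw [e1]
    have b1 : ((x*t)^k / ((Nat.factorial k:ℝ)^2)) ≤ (x*t)^k / (Nat.factorial k : ℝ) := by
      apply div_le_div_of_nonneg_left (by positivity) (hfac_pos k)
      have hk1 : (1:ℝ) ≤ Nat.factorial k :=
        Nat.one_le_cast.2 (Nat.one_le_iff_ne_zero.2 (Nat.factorial_ne_zero k))
      nlinarith
    have b2 : ((Nat.factorial (k+j) : ℝ) / (Nat.factorial (k+j+s+1))) ≤ 1 := by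
      rw [div_le_one (hfac_pos _)]
      exact_mod_cast Nat.factorial_le (by omega)
    calc ((x*t)^k / ((Nat.factorial k:ℝ)^2)) * (t^j / (Nat.factorial j)) *
          ((Nat.factorial (k+j) : ℝ) / (Nat.factorial (k+j+s+1)))
        ≤ ((x*t)^k / (Nat.factorial k : ℝ)) * (t^j / (Nat.factorial j)) * 1 := by
          gcongr <;> positivity
      _ = ((x*t)^k / (Nat.factorial k : ℝ)) * (t^j / (Nat.factorial j)) := by ring
  -- summability of h
  have Sh : Summable h := by
    apply Summable.of_norm_bounded huv
    rintro ⟨k, N⟩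
    have h1 : ‖h (k, N)‖ = (Nat.factorial (N+s) : ℝ) * t^(N+k) * x^k /
        (Nat.factorial s * Nat.factorial N * Nat.factorial k * Nat.factorial (N+s+1+k)) := by
      simp [hhdef, abs_mul, abs_div, abs_pow, abs_of_pos ht, abs_of_pos hx, Nat.abs_cast,
        Real.norm_eq_abs]
    rw [h1]
    have hfle : (Nat.factorial (N+s) : ℝ) * Nat.factorial k ≤ Nat.factorial (N+s+1+k) := by
      have d1 : Nat.factorial (N+s+1) * Nat.factorial k ∣ Nat.factorial (N+s+1+k) :=
        Nat.factorial_mul_factorial_dvd_factorial_add _ _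
      have l1 : Nat.factorial (N+s+1) * Nat.factorial k ≤ Nat.factorial (N+s+1+k) :=
        Nat.le_of_dvd (Nat.factorial_pos _) d1
      have l2 : Nat.factorial (N+s) * Nat.factorial k ≤ Nat.factorial (N+s+1) * Nat.factorial k :=
        Nat.mul_le_mul_right _ (Nat.factorial_le (by omega))
      exact_mod_cast le_trans l2 l1
    have hs1 : (1:ℝ) ≤ Nat.factorial s :=
      Nat.one_le_cast.2 (Nat.one_le_iff_ne_zero.2 (Nat.factorial_ne_zero s))
    have key : (Nat.factorial (N+s) : ℝ) * t^(N+k) * x^k /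
        (Nat.factorial s * Nat.factorial N * Nat.factorial k * Nat.factorial (N+s+1+k))
        ≤ ((x*t)^k / (Nat.factorial k : ℝ)) * (t^N / (Nat.factorial N)) := by
      rw [div_le_iff₀ (by positivity)]
      have expand : ((x*t)^k / (Nat.factorial k : ℝ)) * (t^N / (Nat.factorial N)) *
          ((Nat.factorial s : ℝ) * Nat.factorial N * Nat.factorial k * Nat.factorial (N+s+1+k))
          = t^(N+k) * x^k * ((Nat.factorial s : ℝ) * Nat.factorial (N+s+1+k)) := by
        field_simp
        rw [pow_add, mul_pow]
        ring
      rw [expand]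
      have t1 : (Nat.factorial (N+s) : ℝ) * t^(N+k) * x^k
          = (t^(N+k) * x^k) * ((Nat.factorial (N+s) : ℝ)) := by ring
      rw [t1]
      have t2 : (t^(N+k) * x^k) * ((Nat.factorial (N+s) : ℝ))
          ≤ (t^(N+k) * x^k) * ((Nat.factorial s : ℝ) * Nat.factorial (N+s+1+k)) := by
        apply mul_le_mul_of_nonneg_left _ (by positivity)
        calc (Nat.factorial (N+s) : ℝ) = 1 * Nat.factorial (N+s) := by ring
          _ ≤ (Nat.factorial s : ℝ) * Nat.factorial (N+s+1+k) := by
              apply mul_le_mul hs1 _ (by positivity) (by positivity)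
              exact_mod_cast Nat.factorial_le (by omega)
      calc (t^(N+k) * x^k) * ((Nat.factorial (N+s) : ℝ))
          ≤ (t^(N+k) * x^k) * ((Nat.factorial s : ℝ) * Nat.factorial (N+s+1+k)) := t2
        _ = t^(N+k) * x^k * ((Nat.factorial s : ℝ) * Nat.factorial (N+s+1+k)) := by ring
    exact key
  -- row identity via Cauchy product
  have row : ∀ k : ℕ, (∑' j : ℕ, g (k, j)) = Real.exp (-t) * ∑' N : ℕ, h (k, N) := by
    intro k
    have e1 : ∀ j : ℕ, g (k, j) = (x^k * t^k / ((Nat.factorial k : ℝ)^2)) *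
        ((-1:ℝ)^j * (Nat.factorial (k+j)) / (Nat.factorial j * Nat.factorial (k+j+s+1)) * t^j) := by
      intro j
      simp only [hgdef]
      rw [pow_add]
      ring
    rw [tsum_congr e1, tsum_mul_left, aux_row s k t ht, ← mul_assoc,
      mul_comm (x^k * t^k / ((Nat.factorial k : ℝ)^2)) (Real.exp (-t)), mul_assoc, ← tsum_mul_left]
    congr 1
    apply tsum_congr
    intro N
    simp only [hhdef]
    have hk := (hfac_pos k).ne'
    have hN := (hfac_pos N).ne'
    have hs := (hfac_pos s).ne'
    have hK := (hfac_pos (N+s+1+k)).ne'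
    field_simp
    ring
  -- the LHS series has sum equal to the double sum of g
  set c : ℕ → ℝ := fun n => (-1 : ℝ) ^ n * t ^ n * laguerre n x / Nat.factorial (n + (s+1)) with hcdef
  have hfib := Sg.hasSum.tsum_fiberwise (fun p : ℕ × ℕ => p.1 + p.2)
  have hc : ∀ n : ℕ, (∑' p : ((fun p : ℕ × ℕ => p.1 + p.2) ⁻¹' {n}), g p) = c n := by
    intro n
    have hset : ((fun p : ℕ × ℕ => p.1 + p.2) ⁻¹' {n}) = ↑(Finset.HasAntidiagonal.antidiagonal n) := by
      ext p
      simp [Finset.mem_antidiagonal]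
    rw [hset, Finset.tsum_subtype', Finset.Nat.sum_antidiagonal_eq_sum_range_succ_mk]
    simp only [hcdef, laguerre]
    rw [Finset.mul_sum, Finset.sum_div]
    apply Finset.sum_congr rfl
    intro k hk
    have hkn : k ≤ n := by
      have := Finset.mem_range.1 hk; omega
    have hsub : k + (n - k) = n := by omega
    simp only [hgdef]
    rw [hsub]
    have hsign : (-1:ℝ)^(n-k) = (-1)^n * (-1)^k := by
      have h2 : n + k = (n - k) + 2*k := by omega
      calc (-1:ℝ)^(n-k) = (-1)^(n-k) * (((-1:ℝ)^2)^k) := by norm_num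
        _ = (-1)^((n-k)+2*k) := by rw [pow_add, pow_mul]
        _ = (-1)^(n+k) := by rw [← h2]
        _ = (-1)^n * (-1)^k := pow_add _ _ _
    rw [hsign, show n + (s+1) = n + s + 1 from rfl]
    ring
  have hcHasSum : HasSum c (∑' p : ℕ × ℕ, g p) := by
    rwa [funext hc] at hfib
  -- square roots
  set r := Real.sqrt (x*t) with hrdef
  have hr : 0 < r := Real.sqrt_pos.2 (by positivity)
  set w := Real.sqrt (t/x) with hwdef
  have hw : 0 < w := Real.sqrt_pos.2 (by positivity)
  have hwr : w * r = t := by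
    rw [hwdef, hrdef, ← Real.sqrt_mul (by positivity : (0:ℝ) ≤ t/x),
      show t/x*(x*t) = t^2 by field_simp]
    exact Real.sqrt_sq ht.le
  have hr2 : r^2 = x*t := Real.sq_sqrt (by positivity)
  -- Bessel pointwise identity
  have hb : ∀ j : ℕ,
      ((Nat.factorial (j + (s+1) - 1) : ℝ) / (Nat.factorial ((s+1) - 1) * Nat.factorial j)) *
        (t / x) ^ (((j : ℝ) + ((s+1 : ℕ) : ℝ)) / 2) * besselI (j + (s+1)) (2 * r)
      = ∑' k : ℕ, t^(s+1) * h (k, j) := by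
    intro j
    have harg1 : j + (s+1) - 1 = j + s := by omega
    have harg2 : (s+1) - 1 = s := by omega
    rw [harg1, harg2]
    have hrpow : (t / x) ^ (((j : ℝ) + ((s+1 : ℕ) : ℝ)) / 2) = w ^ (j+s+1) := by
      have hex : ((j : ℝ) + ((s+1 : ℕ) : ℝ)) / 2 = ((1:ℝ)/2) * (((j+s+1 : ℕ) : ℝ)) := by
        push_cast; ring
      rw [hex, Real.rpow_mul (le_of_lt (div_pos ht hx)), Real.rpow_natCast, hwdef,
        Real.sqrt_eq_rpow]
    rw [hrpow, besselI, show 2 * r / 2 = r by ring, ← tsum_mul_left]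
    apply tsum_congr
    intro k
    have hpw : w^(j+s+1) * r^(j+(s+1)+2*k) = t^(j+s+1) * (x*t)^k := by
      have e : r^(j+(s+1)+2*k) = r^(j+s+1) * (r^2)^k := by
        rw [show j+(s+1)+2*k = (j+s+1)+2*k by omega, pow_add, pow_mul]
      calc w^(j+s+1) * r^(j+(s+1)+2*k) = (w*r)^(j+s+1) * (r^2)^k := by
            rw [e, mul_pow]; ring
        _ = t^(j+s+1) * (x*t)^k := by rw [hwr, hr2]
    have step : ((Nat.factorial (j+s) : ℝ) / (Nat.factorial s * Nat.factorial j)) * w ^ (j+s+1) *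
        (r ^ (j+(s+1)+2*k) / (Nat.factorial k * Nat.factorial (j+(s+1)+k)))
        = ((Nat.factorial (j+s) : ℝ) / (Nat.factorial s * Nat.factorial j)) *
          ((w^(j+s+1) * r^(j+(s+1)+2*k)) / (Nat.factorial k * Nat.factorial (j+(s+1)+k))) := by
      ring
    rw [step, hpw]
    simp only [hhdef]
    rw [show j+(s+1)+k = j+s+1+k from rfl, mul_pow]
    have h1 := (hfac_pos (j+s)).ne'
    have h2 := (hfac_pos s).ne'
    have h3 := (hfac_pos j).ne'
    have h4 := (hfac_pos k).ne'
    have h5 := (hfac_pos (j+s+1+k)).ne'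
    field_simp
    ring
  -- RHS series has sum
  have SH' : Summable (fun p : ℕ × ℕ => t^(s+1) * h (p.2, p.1)) :=
    (Sh.prod_symm).mul_left (t^(s+1))
  have hbHasSum : HasSum (fun j : ℕ =>
      ((Nat.factorial (j + (s+1) - 1) : ℝ) / (Nat.factorial ((s+1) - 1) * Nat.factorial j)) *
        (t / x) ^ (((j : ℝ) + ((s+1 : ℕ) : ℝ)) / 2) * besselI (j + (s+1)) (2 * r))
      (∑' p : ℕ × ℕ, t^(s+1) * h (p.2, p.1)) := by
    apply SH'.hasSum.prod_fiberwise
    intro j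
    rw [hb j]
    exact (SH'.prod_factor j).hasSum
  refine ⟨hcHasSum.summable, hbHasSum.summable, ?_⟩
  rw [hcHasSum.tsum_eq, hbHasSum.tsum_eq]
  have lhs_eq : (∑' p : ℕ × ℕ, g p) = Real.exp (-t) * ∑' k : ℕ, ∑' N : ℕ, h (k, N) := by
    rw [Sg.tsum_prod, tsum_congr row, tsum_mul_left]
  have rhs_eq : (∑' p : ℕ × ℕ, t^(s+1) * h (p.2, p.1)) = t^(s+1) * ∑' k : ℕ, ∑' N : ℕ, h (k, N) := by
    rw [tsum_mul_left]
    congr 1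
    have swap_eq : (∑' p : ℕ × ℕ, h (p.2, p.1)) = ∑' p : ℕ × ℕ, h p := by
      have := Equiv.tsum_eq (Equiv.prodComm ℕ ℕ) h
      simpa [Equiv.prodComm, Prod.swap] using this
    rw [swap_eq, Sh.tsum_prod]
  rw [lhs_eq, rhs_eq]
  have htp : (t:ℝ)^(s+1) ≠ 0 := by positivity
  field_simp
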